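/- Fix k₀ ∈ ℕ, c > 0, and γ ∈ (1/2, 1], with c ≥ 6 if γ = 1. Let {X_k}, {Y_k}, {Z_k} be nonnegative random variables adapted to a filtration {F_k} satisfying E[X_{k+1} | F_k] ≤ (1 − c k^{−γ}) X_k − Y_k + Z_k for all k ≥ k₀. Define a_k = k^{2γ−1} / (log(k+1))². Then on the event {∑_k a_{k+1} Z_k < ∞}, the sequence a_k X_k converges almost surely to a finite random variable and ∑_k a_{k+1} Y_k < ∞ almost surely. -/

import Mathlib

open Filter Topology MeasureTheory

namespace RSAux

variable {Ω : Type*} {m0 : MeasurableSpace Ω} {μ : Measure Ω}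

/-- Stopped version of a process `M`, frozen as soon as the (monotone) family of events `E k`
fails. -/
noncomputable def stopN (M : ℕ → Ω → ℝ) (E : ℕ → Set Ω) : ℕ → Ω → ℝ
  | 0 => M 0
  | (k+1) => fun ω => stopN M E k ω + (E k).indicator (fun ω' => M (k+1) ω' - M k ω') ω

/-- Core Robbins–Siegmund lemma (no multiplicative term). -/
theorem rs_core [IsProbabilityMeasure μ] (𝒢 : Filtration ℕ m0)
    (A C D : ℕ → Ω → ℝ) (hA : Adapted 𝒢 A) (hC : Adapted 𝒢 C) (hD : Adapted 𝒢 D)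
    (hA0 : ∀ k ω, 0 ≤ A k ω) (hC0 : ∀ k ω, 0 ≤ C k ω) (hD0 : ∀ k ω, 0 ≤ D k ω)
    (hAint : ∀ k, Integrable (A k) μ) (hCint : ∀ k, Integrable (C k) μ)
    (hDint : ∀ k, Integrable (D k) μ)
    (hstep : ∀ k, μ[A (k+1)|𝒢 k] ≤ᵐ[μ] fun ω => A k ω - D k ω + C k ω) :
    ∀ᵐ ω ∂μ, (Summable fun k => C k ω) →
      (∃ L, Tendsto (fun k => A k ω) atTop (𝓝 L)) ∧ Summable fun k => D k ω := by
  classical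
  set SC : ℕ → Ω → ℝ := fun k ω => ∑ j ∈ Finset.range k, C j ω with hSCdef
  set SD : ℕ → Ω → ℝ := fun k ω => ∑ j ∈ Finset.range k, D j ω with hSDdef
  set M : ℕ → Ω → ℝ := fun k ω => A k ω + SD k ω - SC k ω with hMdef
  -- measurability of partial sums
  have hSCm : ∀ k i, k ≤ i + 1 → StronglyMeasurable[𝒢 i] (SC k) := by
    intro k i hki
    apply Finset.stronglyMeasurable_fun_sum
    intro j hj
    exact (hC j).stronglyMeasurable.mono (𝒢.mono (by simp at hj; omega))
  have hSDm : ∀ k i, k ≤ i + 1 → StronglyMeasurable[𝒢 i] (SD k) := by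
    intro k i hki
    apply Finset.stronglyMeasurable_fun_sum
    intro j hj
    exact (hD j).stronglyMeasurable.mono (𝒢.mono (by simp at hj; omega))
  have hSCint : ∀ k, Integrable (SC k) μ := fun k =>
    integrable_finset_sum _ fun j _ => hCint j
  have hSDint : ∀ k, Integrable (SD k) μ := fun k =>
    integrable_finset_sum _ fun j _ => hDint j
  have hMadp : StronglyAdapted 𝒢 M := fun k =>
    ((hA k).stronglyMeasurable.add (hSDm k k k.le_succ)).sub (hSCm k k k.le_succ)
  have hMint : ∀ k, Integrable (M k) μ := fun k =>
    ((hAint k).add (hSDint k)).sub (hSCint k)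
  -- supermartingale step for M
  have hMstep : ∀ k, μ[M (k+1)|𝒢 k] ≤ᵐ[μ] M k := by
    intro k
    have hmeas : StronglyMeasurable[𝒢 k] (fun ω => SD (k+1) ω - SC (k+1) ω) :=
      (hSDm (k+1) k le_rfl).sub (hSCm (k+1) k le_rfl)
    have hint : Integrable (fun ω => SD (k+1) ω - SC (k+1) ω) μ :=
      (hSDint (k+1)).sub (hSCint (k+1))
    have hM1 : M (k+1) = A (k+1) + fun ω => SD (k+1) ω - SC (k+1) ω := by
      funext ω; simp [hMdef]; ring
    have h1 : μ[M (k+1)|𝒢 k] =ᵐ[μ]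
        μ[A (k+1)|𝒢 k] + fun ω => SD (k+1) ω - SC (k+1) ω := by
      rw [hM1]
      refine (condExp_add (hAint _) hint (m := 𝒢 k)).trans ?_
      rw [condExp_of_stronglyMeasurable (𝒢.le k) hmeas hint]
    filter_upwards [h1, hstep k] with ω h1ω h2ω
    have e1 : SD (k+1) ω = SD k ω + D k ω := Finset.sum_range_succ _ _
    have e2 : SC (k+1) ω = SC k ω + C k ω := Finset.sum_range_succ _ _
    have : (μ[A (k+1)|𝒢 k]) ω ≤ A k ω - D k ω + C k ω := h2ω
    simp only [Pi.add_apply] at h1ω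
    simp only [hMdef]
    rw [h1ω, e1, e2]
    linarith
  have hMsuper : Supermartingale M 𝒢 μ := supermartingale_nat hMadp hMint hMstep
  have hMlb : ∀ k ω, -SC k ω ≤ M k ω := by
    intro k ω
    have h1 : 0 ≤ A k ω := hA0 k ω
    have h2 : 0 ≤ SD k ω := Finset.sum_nonneg fun j _ => hD0 j ω
    simp only [hMdef]; linarith
  have hSCmono : ∀ ω, Monotone fun k => SC k ω := by
    intro ω
    apply monotone_nat_of_le_succ
    intro k
    have := Finset.sum_range_succ (fun j => C j ω) k
    simp only [hSCdef]
    rw [this]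
    linarith [hC0 k ω]
  -- the stopped processes
  have Hn : ∀ n : ℕ, ∀ᵐ ω ∂μ, ∃ L,
      Tendsto (fun k => stopN M (fun k => {ω' | SC (k+1) ω' ≤ (n:ℝ)}) k ω) atTop (𝓝 L) := by
    intro n
    set E : ℕ → Set Ω := fun k => {ω' | SC (k+1) ω' ≤ (n:ℝ)} with hEdef
    set N : ℕ → Ω → ℝ := stopN M E with hNdef
    have hEmeas : ∀ k, MeasurableSet[𝒢 k] (E k) := fun k =>
      measurableSet_le (hSCm (k+1) k le_rfl).measurable measurable_const
    have hNsucc : ∀ k, N (k+1) =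
        fun ω => N k ω + (E k).indicator (fun ω' => M (k+1) ω' - M k ω') ω := fun k => rfl
    have hNadp : ∀ k, StronglyMeasurable[𝒢 k] (N k) := by
      intro k
      induction k with
      | zero => exact hMadp 0
      | succ k ih =>
        rw [hNsucc k]
        exact (ih.mono (𝒢.mono k.le_succ)).add
          (((hMadp (k+1)).sub ((hMadp k).mono (𝒢.mono k.le_succ))).indicator
            ((𝒢.mono k.le_succ) _ (hEmeas k)))
    have hNint : ∀ k, Integrable (N k) μ := by
      intro k
      induction k with
      | zero => exact hMint 0
      | succ k ih =>
        rw [hNsucc k]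
        exact ih.add (((hMint (k+1)).sub (hMint k)).indicator (𝒢.le k _ (hEmeas k)))
    have hNstep : ∀ k, μ[N (k+1)|𝒢 k] ≤ᵐ[μ] N k := by
      intro k
      have gint : Integrable (fun ω' => M (k+1) ω' - M k ω') μ := (hMint (k+1)).sub (hMint k)
      have h1 : μ[N (k+1)|𝒢 k] =ᵐ[μ]
          N k + μ[(E k).indicator (fun ω' => M (k+1) ω' - M k ω')|𝒢 k] := by
        rw [hNsucc k]
        have : (fun ω => N k ω + (E k).indicator (fun ω' => M (k+1) ω' - M k ω') ω)
            = N k + (E k).indicator (fun ω' => M (k+1) ω' - M k ω') := rfl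
        rw [this]
        refine (condExp_add (hNint k) (gint.indicator (𝒢.le k _ (hEmeas k))) (m := 𝒢 k)).trans ?_
        rw [condExp_of_stronglyMeasurable (𝒢.le k) (hNadp k) (hNint k)]
      have h2 : μ[(E k).indicator (fun ω' => M (k+1) ω' - M k ω')|𝒢 k] =ᵐ[μ]
          (E k).indicator (μ[fun ω' => M (k+1) ω' - M k ω'|𝒢 k]) :=
        condExp_indicator gint (hEmeas k)
      have h3 : μ[fun ω' => M (k+1) ω' - M k ω'|𝒢 k] ≤ᵐ[μ] 0 := by
        have := condExp_sub (hMint (k+1)) (hMint k) (m := 𝒢 k)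
        have h4 : (fun ω' => M (k+1) ω' - M k ω') = M (k+1) - M k := rfl
        rw [h4]
        refine this.le.trans ?_
        have h5 : μ[M k|𝒢 k] = M k :=
          condExp_of_stronglyMeasurable (𝒢.le k) (hMadp k) (hMint k)
        rw [h5]
        filter_upwards [hMstep k] with ω hω
        simp only [Pi.sub_apply, Pi.zero_apply]
        linarith
      filter_upwards [h1, h2, h3] with ω h1ω h2ω h3ω
      rw [h1ω]
      simp only [Pi.add_apply]
      have : (E k).indicator (μ[fun ω' => M (k+1) ω' - M k ω'|𝒢 k]) ω ≤ 0 := by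
        by_cases hm : ω ∈ E k
        · rw [Set.indicator_of_mem hm]; exact h3ω
        · rw [Set.indicator_of_notMem hm]
      rw [h2ω]
      linarith
    have hNsuper : Supermartingale N 𝒢 μ := supermartingale_nat hNadp hNint hNstep
    -- pointwise lower bound
    have key : ∀ ω k, ((∀ j, j < k → SC (j+1) ω ≤ (n:ℝ)) → N k ω = M k ω)
        ∧ -(n:ℝ) ≤ N k ω := by
      intro ω k
      induction k with
      | zero =>
        constructor
        · intro _; rfl
        · have : N 0 ω = M 0 ω := rfl
          rw [this]
          have h0 : SC 0 ω = 0 := by simp [hSCdef]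
          have := hMlb 0 ω
          rw [h0] at this
          have hn : (0:ℝ) ≤ n := Nat.cast_nonneg n
          linarith
      | succ k ih =>
        by_cases hmem : SC (k+1) ω ≤ (n:ℝ)
        · have hall : ∀ j, j < k + 1 → SC (j+1) ω ≤ (n:ℝ) := fun j hj =>
            le_trans (hSCmono ω (by omega)) hmem
          have hNk : N k ω = M k ω := ih.1 fun j hj => hall j (by omega)
          have heq : N (k+1) ω = M (k+1) ω := by
            have hm : ω ∈ E k := hmem
            show N k ω + (E k).indicator _ ω = _
            rw [Set.indicator_of_mem hm, hNk]; ring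
          refine ⟨fun _ => heq, ?_⟩
          rw [heq]
          have := hMlb (k+1) ω
          linarith
        · constructor
          · intro hall; exact absurd (hall k (Nat.lt_succ_self k)) hmem
          · have hm : ω ∉ E k := hmem
            show -(n:ℝ) ≤ N k ω + (E k).indicator _ ω
            rw [Set.indicator_of_notMem hm]
            have := ih.2; linarith
    -- L¹ bound
    have hexp : ∀ k, ∫ ω, N k ω ∂μ ≤ ∫ ω, N 0 ω ∂μ := by
      intro k
      have h1 := hNsuper.condExp_ae_le (Nat.zero_le k)
      have h2 : ∫ ω, (μ[N k|𝒢 0]) ω ∂μ = ∫ ω, N k ω ∂μ := integral_condExp (𝒢.le 0)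
      calc ∫ ω, N k ω ∂μ = ∫ ω, (μ[N k|𝒢 0]) ω ∂μ := h2.symm
        _ ≤ ∫ ω, N 0 ω ∂μ := integral_mono_ae integrable_condExp (hNint 0) h1
    have hL1 : ∀ k, eLpNorm (N k) 1 μ ≤
        ENNReal.ofReal (∫ ω, N 0 ω ∂μ + 2 * n) := by
      intro k
      rw [eLpNorm_one_eq_lintegral_enorm,
        ← ofReal_integral_norm_eq_lintegral_enorm (hNint k)]
      apply ENNReal.ofReal_le_ofReal
      have hptwise : ∀ ω, ‖N k ω‖ ≤ N k ω + 2 * n := by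
        intro ω
        have := (key ω k).2
        rw [Real.norm_eq_abs, abs_le]
        constructor
        · have hn : (0:ℝ) ≤ n := Nat.cast_nonneg n
          linarith
        · linarith
      calc ∫ ω, ‖N k ω‖ ∂μ ≤ ∫ ω, (N k ω + 2 * n) ∂μ :=
            integral_mono (hNint k).norm ((hNint k).add (integrable_const _)) hptwise
        _ = ∫ ω, N k ω ∂μ + 2 * n := by
            rw [integral_add (hNint k) (integrable_const _)]
            simp [measure_univ]
        _ ≤ ∫ ω, N 0 ω ∂μ + 2 * n := by linarith [hexp k]
    have := hNsuper.neg.exists_ae_tendsto_of_bdd (fun k => by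
      rw [show (-N) k = -(N k) from rfl, eLpNorm_neg]; exact hL1 k)
    filter_upwards [this] with ω ⟨L, hL⟩
    refine ⟨-L, ?_⟩
    have : Tendsto (fun k => -(-N k ω)) atTop (𝓝 (-L)) := hL.neg
    simpa using this
  have Hall : ∀ᵐ ω ∂μ, ∀ n : ℕ, ∃ L,
      Tendsto (fun k => stopN M (fun k => {ω' | SC (k+1) ω' ≤ (n:ℝ)}) k ω) atTop (𝓝 L) :=
    (ae_all_iff).2 Hn
  -- pointwise invariant (proved again outside, since `key` above was inside Hn)
  have key2 : ∀ n : ℕ, ∀ ω k, (∀ j, j < k → SC (j+1) ω ≤ (n:ℝ)) →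
      stopN M (fun k => {ω' | SC (k+1) ω' ≤ (n:ℝ)}) k ω = M k ω := by
    intro n ω k
    induction k with
    | zero => intro _; rfl
    | succ k ih =>
      intro hall
      have hmem : SC (k+1) ω ≤ (n:ℝ) := hall k (Nat.lt_succ_self k)
      have hNk := ih fun j hj => hall j (by omega)
      have hm : ω ∈ {ω' | SC (k+1) ω' ≤ (n:ℝ)} := hmem
      show stopN M _ k ω + Set.indicator _ _ ω = _
      rw [Set.indicator_of_mem hm, hNk]; ring
  filter_upwards [Hall] with ω hω hsumC
  have hT : ∀ k, SC k ω ≤ ∑' j, C j ω := by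
    intro k
    exact Summable.sum_le_tsum _ (fun j _ => hC0 j ω) hsumC
  obtain ⟨n, hn⟩ := exists_nat_ge (∑' j, C j ω)
  have hall : ∀ k, ∀ j, j < k → SC (j+1) ω ≤ (n:ℝ) := fun k j _ => le_trans (hT (j+1)) hn
  obtain ⟨L, hL⟩ := hω n
  have hM : Tendsto (fun k => M k ω) atTop (𝓝 L) :=
    (tendsto_congr fun k => key2 n ω k (hall k)).1 hL
  have hSCconv : Tendsto (fun k => SC k ω) atTop (𝓝 (∑' j, C j ω)) :=
    hsumC.hasSum.tendsto_sum_nat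
  -- summability of D
  obtain ⟨B, hB⟩ := (hM.add hSCconv).bddAbove_range
  have hsumD : Summable fun k => D k ω := by
    apply summable_of_sum_range_le (fun k => hD0 k ω)
    intro k
    have h1 : SD k ω ≤ M k ω + SC k ω := by
      have := hA0 k ω
      simp only [hMdef]; linarith
    have h2 : M k ω + SC k ω ≤ B := hB ⟨k, rfl⟩
    calc ∑ i ∈ Finset.range k, D i ω = SD k ω := rfl
      _ ≤ B := le_trans h1 h2
  refine ⟨⟨L - ∑' j, D j ω + ∑' j, C j ω, ?_⟩, hsumD⟩
  have hSDconv : Tendsto (fun k => SD k ω) atTop (𝓝 (∑' j, D j ω)) :=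
    hsumD.hasSum.tendsto_sum_nat
  have : Tendsto (fun k => M k ω - SD k ω + SC k ω) atTop
      (𝓝 (L - ∑' j, D j ω + ∑' j, C j ω)) := (hM.sub hSDconv).add hSCconv
  refine this.congr fun k => ?_
  simp only [hMdef]; ring



/-- Deterministic weight inequality: eventually `(1 - c k^{-γ}) a_{k+1} ≤ a_k`. -/
theorem weight_ineq (c γ : ℝ) (hc : 0 < c) (hγ : 1 / 2 < γ ∧ γ ≤ 1) (hc6 : γ = 1 → 6 ≤ c) :
    ∀ᶠ k : ℕ in atTop, (1 - c * (k : ℝ) ^ (-γ)) *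
        (((k:ℝ)+1) ^ (2 * γ - 1) / Real.log ((k:ℝ) + 2) ^ 2)
      ≤ (k:ℝ) ^ (2 * γ - 1) / Real.log ((k:ℝ) + 1) ^ 2 := by
  have hp0 : 0 < 2 * γ - 1 := by linarith [hγ.1]
  have hp1 : 2 * γ - 1 ≤ 1 := by linarith [hγ.2]
  have hev : ∀ᶠ k : ℕ in atTop, (2 * γ - 1) * (k : ℝ) ^ (γ - 1) ≤ c := by
    rcases eq_or_lt_of_le hγ.2 with h1 | h1
    · apply Eventually.of_forall
      intro k
      rw [h1]
      norm_num
      linarith [hc6 h1]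
    · have h2 : Tendsto (fun k : ℕ => (k:ℝ) ^ (γ - 1)) atTop (𝓝 0) := by
        have := (tendsto_rpow_neg_atTop (y := 1 - γ) (by linarith)).comp
          (tendsto_natCast_atTop_atTop (R := ℝ))
        simpa only [Function.comp_def, neg_sub] using this
      have h3 : Tendsto (fun k : ℕ => (2 * γ - 1) * (k:ℝ) ^ (γ - 1)) atTop (𝓝 0) := by
        simpa using h2.const_mul (2 * γ - 1)
      exact (h3.eventually_lt_const hc).mono fun k hk => hk.le
  filter_upwards [hev, eventually_ge_atTop 1] with k h1 h3
  set kr := (k:ℝ) with hkr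
  have hkr1 : (1:ℝ) ≤ kr := by rw [hkr]; exact_mod_cast h3
  have hkr0 : (0:ℝ) < kr := by linarith
  have ha1 : (0:ℝ) ≤ (kr+1) ^ (2 * γ - 1) / Real.log (kr + 2) ^ 2 :=
    div_nonneg (Real.rpow_nonneg (by linarith) _) (sq_nonneg _)
  have hak : (0:ℝ) ≤ kr ^ (2 * γ - 1) / Real.log (kr + 1) ^ 2 :=
    div_nonneg (Real.rpow_nonneg (by linarith) _) (sq_nonneg _)
  by_cases hs : 1 - c * kr ^ (-γ) ≤ 0
  · exact le_trans (mul_nonpos_of_nonpos_of_nonneg hs ha1) hak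
  push_neg at hs
  have hlog1 : 0 < Real.log (kr + 1) := Real.log_pos (by linarith)
  have hlog2 : Real.log (kr + 1) ≤ Real.log (kr + 2) := Real.log_le_log (by linarith) (by linarith)
  have hlogsq : Real.log (kr + 1) ^ 2 ≤ Real.log (kr + 2) ^ 2 :=
    pow_le_pow_left₀ hlog1.le hlog2 2
  have hrpow_pos : (0:ℝ) < kr ^ (-γ) := Real.rpow_pos_of_pos hkr0 _
  -- key scalar inequality : (1 - c kr^{-γ}) * (kr+1)^{2γ-1} ≤ kr^{2γ-1}
  have hkey : (1 - c * kr ^ (-γ)) * (kr+1) ^ (2 * γ - 1) ≤ kr ^ (2 * γ - 1) := by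
    have hsplit : (kr + 1) ^ (2 * γ - 1) = kr ^ (2 * γ - 1) * (1 + 1/kr) ^ (2 * γ - 1) := by
      rw [← Real.mul_rpow hkr0.le (by positivity)]
      congr 1
      field_simp
    have hbern : (1 + 1/kr) ^ (2 * γ - 1) ≤ 1 + (2 * γ - 1) * (1/kr) :=
      rpow_one_add_le_one_add_mul_self
        (le_trans (by norm_num : (-1:ℝ) ≤ 0) (by positivity)) hp0.le hp1
    have hfrac : (2 * γ - 1) * (1/kr) ≤ c * kr ^ (-γ) := by
      have e1 : kr ^ (γ - 1) * kr ^ (-γ) = 1/kr := by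
        rw [← Real.rpow_add hkr0]
        norm_num
        rw [show γ - 1 + -γ = -1 by ring, Real.rpow_neg_one]
      calc (2 * γ - 1) * (1/kr) = (2 * γ - 1) * kr ^ (γ - 1) * kr ^ (-γ) := by
            rw [mul_assoc, e1]
        _ ≤ c * kr ^ (-γ) := mul_le_mul_of_nonneg_right h1 hrpow_pos.le
    have hkp : (0:ℝ) ≤ kr ^ (2 * γ - 1) := Real.rpow_nonneg hkr0.le _
    calc (1 - c * kr ^ (-γ)) * (kr+1) ^ (2 * γ - 1)
        = kr ^ (2 * γ - 1) * ((1 - c * kr ^ (-γ)) * (1 + 1/kr) ^ (2 * γ - 1)) := by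
          rw [hsplit]; ring
      _ ≤ kr ^ (2 * γ - 1) * 1 := by
          apply mul_le_mul_of_nonneg_left _ hkp
          calc (1 - c * kr ^ (-γ)) * (1 + 1/kr) ^ (2 * γ - 1)
              ≤ (1 - c * kr ^ (-γ)) * (1 + (2 * γ - 1) * (1/kr)) :=
                mul_le_mul_of_nonneg_left hbern hs.le
            _ ≤ 1 := by
                nlinarith [hfrac, mul_pos (mul_pos hc hrpow_pos) (mul_pos hp0 (show (0:ℝ) < 1/kr by positivity))]
      _ = kr ^ (2 * γ - 1) := mul_one _
  calc (1 - c * kr ^ (-γ)) * ((kr+1) ^ (2 * γ - 1) / Real.log (kr + 2) ^ 2)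
      ≤ (1 - c * kr ^ (-γ)) * ((kr+1) ^ (2 * γ - 1) / Real.log (kr + 1) ^ 2) := by
        apply mul_le_mul_of_nonneg_left _ hs.le
        exact (div_le_div_iff_of_pos_left (Real.rpow_pos_of_pos (by linarith) _)
          (pow_pos (hlog1.trans_le hlog2) 2) (pow_pos hlog1 2)).2 hlogsq
    _ = (1 - c * kr ^ (-γ)) * (kr+1) ^ (2 * γ - 1) / Real.log (kr + 1) ^ 2 := by ring
    _ ≤ kr ^ (2 * γ - 1) / Real.log (kr + 1) ^ 2 :=
        (div_le_div_iff_of_pos_right (pow_pos hlog1 2)).2 hkey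


end RSAux

open RSAux

/-- A Robbins–Siegmund-type lemma. Suppose nonnegative adapted integrable
processes `X, Y, Z` satisfy `E[X_{k+1} | F_k] ≤ (1 − c k^{−γ}) X_k − Y_k + Z_k` for `k ≥ k₀`,
with `γ ∈ (1/2, 1]` and `c ≥ 6` if `γ = 1`. With `a_k = k^{2γ−1}/(log(k+1))²`, almost surely on
the event `{∑ a_{k+1} Z_k < ∞}`, the sequence `a_k X_k` converges to a finite limit and
`∑ a_{k+1} Y_k < ∞`. -/
theorem robbins_siegmund_weighted
    {Ω : Type*} {m0 : MeasurableSpace Ω} {μ : Measure Ω} [IsProbabilityMeasure μ]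
    (ℱ : Filtration ℕ m0) (X Y Z : ℕ → Ω → ℝ) (k0 : ℕ) (c γ : ℝ)
    (hc : 0 < c) (hγ : 1 / 2 < γ ∧ γ ≤ 1) (hc6 : γ = 1 → 6 ≤ c)
    (haX : Adapted ℱ X) (haY : Adapted ℱ Y) (haZ : Adapted ℱ Z)
    (hXpos : ∀ k ω, 0 ≤ X k ω) (hYpos : ∀ k ω, 0 ≤ Y k ω) (hZpos : ∀ k ω, 0 ≤ Z k ω)
    (hXint : ∀ k, Integrable (X k) μ) (hYint : ∀ k, Integrable (Y k) μ)
    (hZint : ∀ k, Integrable (Z k) μ)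
    (hrec : ∀ k, k0 ≤ k →
      μ[X (k + 1) | ℱ k] ≤ᵐ[μ]
        fun ω => (1 - c * (k : ℝ) ^ (-γ)) * X k ω - Y k ω + Z k ω) :
    ∀ᵐ ω ∂μ,
      (Summable fun k : ℕ =>
          ((k + 1 : ℝ) ^ (2 * γ - 1) / Real.log ((k : ℝ) + 2) ^ 2) * Z k ω) →
      (∃ V : ℝ, Tendsto
          (fun k : ℕ => ((k : ℝ) ^ (2 * γ - 1) / Real.log ((k : ℝ) + 1) ^ 2) * X k ω)
          atTop (𝓝 V)) ∧
      Summable fun k : ℕ =>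
        ((k + 1 : ℝ) ^ (2 * γ - 1) / Real.log ((k : ℝ) + 2) ^ 2) * Y k ω := by
  classical
  set a : ℕ → ℝ := fun k => (k : ℝ) ^ (2 * γ - 1) / Real.log ((k : ℝ) + 1) ^ 2 with hadef
  have ha0 : ∀ k, 0 ≤ a k := fun k =>
    div_nonneg (Real.rpow_nonneg (Nat.cast_nonneg k) _) (sq_nonneg _)
  have hw : ∀ k : ℕ, ((k + 1 : ℝ) ^ (2 * γ - 1) / Real.log ((k : ℝ) + 2) ^ 2) = a (k + 1) := by
    intro k
    simp only [hadef]
    push_cast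
    norm_num [show ((k:ℝ) + 1) + 1 = (k:ℝ) + 2 by ring]
  -- choose the threshold K
  obtain ⟨K, hK⟩ := eventually_atTop.1
    ((weight_ineq c γ hc hγ hc6).and (eventually_ge_atTop k0))
  have hdet : ∀ k, K ≤ k →
      (1 - c * (k : ℝ) ^ (-γ)) * a (k + 1) ≤ a k := by
    intro k hk
    have h := (hK k hk).1
    have e : a (k + 1) = ((k:ℝ)+1) ^ (2 * γ - 1) / Real.log ((k:ℝ) + 2) ^ 2 := (hw k).symm
    rw [e]
    exact h
  have hk0K : k0 ≤ K := (hK K le_rfl).2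
  -- shifted filtration and processes
  set 𝒢 : Filtration ℕ m0 :=
    { seq := fun k => ℱ (K + k),
      mono' := fun i j hij => ℱ.mono (Nat.add_le_add_left hij K),
      le' := fun k => ℱ.le (K + k) } with h𝒢def
  set A : ℕ → Ω → ℝ := fun k ω => a (K + k) * X (K + k) ω with hAdef
  set C : ℕ → Ω → ℝ := fun k ω => a (K + k + 1) * Z (K + k) ω with hCdef
  set D : ℕ → Ω → ℝ := fun k ω => a (K + k + 1) * Y (K + k) ω with hDdef
  have hA : Adapted 𝒢 A := fun k => (haX (K + k)).const_mul _
  have hC : Adapted 𝒢 C := fun k => (haZ (K + k)).const_mul _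
  have hD : Adapted 𝒢 D := fun k => (haY (K + k)).const_mul _
  have hA0 : ∀ k ω, 0 ≤ A k ω := fun k ω => mul_nonneg (ha0 _) (hXpos _ ω)
  have hC0 : ∀ k ω, 0 ≤ C k ω := fun k ω => mul_nonneg (ha0 _) (hZpos _ ω)
  have hD0 : ∀ k ω, 0 ≤ D k ω := fun k ω => mul_nonneg (ha0 _) (hYpos _ ω)
  have hAint : ∀ k, Integrable (A k) μ := fun k => (hXint (K + k)).const_mul _
  have hCint : ∀ k, Integrable (C k) μ := fun k => (hZint (K + k)).const_mul _
  have hDint : ∀ k, Integrable (D k) μ := fun k => (hYint (K + k)).const_mul _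
  have hstep : ∀ k, μ[A (k+1)|𝒢 k] ≤ᵐ[μ] fun ω => A k ω - D k ω + C k ω := by
    intro k
    have h1 : μ[A (k+1)|𝒢 k] =ᵐ[μ]
        fun ω => a (K + k + 1) * (μ[X (K + k + 1)|ℱ (K + k)]) ω := by
      have h2 := condExp_smul (μ := μ) (m := ℱ (K + k)) (a (K + k + 1)) (X (K + k + 1))
      have h3 : A (k+1) = a (K + k + 1) • X (K + k + 1) := by
        funext ω; simp only [hAdef, Pi.smul_apply, smul_eq_mul, Nat.add_succ]
      rw [show (𝒢 k : MeasurableSpace Ω) = ℱ (K + k) from rfl, h3]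
      exact h2.trans (Eventually.of_forall fun ω => by simp)
    have h4 := hrec (K + k) (le_trans hk0K (Nat.le_add_right K k))
    filter_upwards [h1, h4] with ω h1ω h4ω
    rw [h1ω]
    have h5 : a (K + k + 1) * (μ[X (K + k + 1)|ℱ (K + k)]) ω ≤
        a (K + k + 1) * ((1 - c * ((K + k : ℕ) : ℝ) ^ (-γ)) * X (K + k) ω
          - Y (K + k) ω + Z (K + k) ω) :=
      mul_le_mul_of_nonneg_left h4ω (ha0 _)
    have h6 := mul_le_mul_of_nonneg_right
      (hdet (K + k) (Nat.le_add_right K k)) (hXpos (K + k) ω)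
    simp only [hAdef, hCdef, hDdef]
    nlinarith [h5, h6]
  have hmain := rs_core 𝒢 A C D hA hC hD hA0 hC0 hD0 hAint hCint hDint hstep
  filter_upwards [hmain] with ω hω hsum
  have hsum' : Summable fun k => C k ω := by
    have h1 : Summable fun k : ℕ => a (k + 1) * Z k ω := by
      refine hsum.congr fun k => ?_
      rw [hw k]
    have h2 : Summable fun k : ℕ => a (k + K + 1) * Z (k + K) ω :=
      (summable_nat_add_iff K).2 h1
    refine h2.congr fun k => ?_
    simp only [hCdef]
    rw [Nat.add_comm k K]
  obtain ⟨⟨L, hL⟩, hsumD⟩ := hω hsum'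
  constructor
  · refine ⟨L, ?_⟩
    have h1 : Tendsto (fun k => a (k + K) * X (k + K) ω) atTop (𝓝 L) := by
      refine hL.congr fun k => ?_
      simp only [hAdef]
      rw [Nat.add_comm K k]
    exact (tendsto_add_atTop_iff_nat K).1 h1
  · have h1 : Summable fun k : ℕ => a (k + K + 1) * Y (k + K) ω := by
      refine hsumD.congr fun k => ?_
      simp only [hDdef]
      rw [Nat.add_comm k K]
    have h2 : Summable fun k : ℕ => a (k + 1) * Y k ω := (summable_nat_add_iff K).1 h1
    refine h2.congr fun k => ?_
    rw [hw k]
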